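/- For the random cubical complex Q(n,p) on the d-dimensional discrete torus with n = m^d sites, the expected Euler characteristic satisfies E[χ(Q(n,p))] = m^d * Σ_{k=0}^d (-1)^k (d choose k) (1 - (1-p)^(2^(d-k))). -/

import Mathlib

open MeasureTheory

/-- A site `y` is adjacent to the `k`-face `(x, S)` of the cubical grid on the
`d`-dimensional discrete torus `(ZMod m)^d`: `y = x - ε` where `ε i = 0` for `i ∈ S`
and `ε i ∈ {0, 1}` for `i ∉ S`. -/
def cubeAdjacent (d m : ℕ) (x : Fin d → ZMod m) (S : Finset (Fin d))
    (y : Fin d → ZMod m) : Prop :=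
  ∃ ε : Fin d → ZMod m, (∀ i, i ∈ S → ε i = 0) ∧ (∀ i, i ∉ S → ε i = 0 ∨ ε i = 1) ∧
    y = x - ε

/-- The face `(x, S)` is present in the configuration `ω` iff at least one adjacent
site is open. -/
def facePresent (d m : ℕ) (ω : (Fin d → ZMod m) → Bool)
    (x : Fin d → ZMod m) (S : Finset (Fin d)) : Prop :=
  ∃ y, cubeAdjacent d m x S y ∧ ω y = true

open scoped Classical in
/-- `numFaces d m k ω` is the number of `k`-faces present in the configuration `ω`. -/
noncomputable def numFaces (d m k : ℕ) [NeZero m] (ω : (Fin d → ZMod m) → Bool) : ℕ :=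
  (Finset.univ.filter
    (fun xS : (Fin d → ZMod m) × Finset (Fin d) =>
      xS.2.card = k ∧ facePresent d m ω xS.1 xS.2)).card

/-- The Bernoulli(p) measure on `Bool`. -/
noncomputable def bernoulliMeasure (p : ℝ) : Measure Bool :=
  (ENNReal.ofReal p) • Measure.dirac true + (ENNReal.ofReal (1 - p)) • Measure.dirac false

/-- The law of the random cubical complex `Q(n, p)`: each site of the discrete torus
`(ZMod m)^d` is open independently with probability `p`. -/
noncomputable def cubicalMeasure (d m : ℕ) [NeZero m] (p : ℝ) :
    Measure ((Fin d → ZMod m) → Bool) :=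
  Measure.pi fun _ => bernoulliMeasure p

/-- The Euler characteristic of a configuration `ω`:
`χ(ω) = Σ_{k=0}^d (-1)^k F_k(ω)`. -/
noncomputable def eulerChar (d m : ℕ) [NeZero m] (ω : (Fin d → ZMod m) → Bool) : ℝ :=
  ∑ k ∈ Finset.range (d + 1), (-1 : ℝ) ^ k * (numFaces d m k ω : ℝ)

open scoped Classical

namespace ExpectedEulerAux

/-- The weight of a single site state. -/
noncomputable def w (p : ℝ) (b : Bool) : ℝ := if b then p else 1 - p

lemma bern_singleton (p : ℝ) (b : Bool) :
    bernoulliMeasure p {b} = ENNReal.ofReal (w p b) := by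
  cases b <;> simp [bernoulliMeasure, w, Measure.dirac_apply]

lemma bern_prob (p : ℝ) (hp0 : 0 ≤ p) (hp1 : p ≤ 1) :
    IsProbabilityMeasure (bernoulliMeasure p) := by
  constructor
  simp [bernoulliMeasure]
  rw [← ENNReal.ofReal_add hp0 (by linarith)]
  norm_num

lemma pi_singleton {d m : ℕ} [NeZero m] (p : ℝ) (hp0 : 0 ≤ p) (hp1 : p ≤ 1)
    (ω : (Fin d → ZMod m) → Bool) :
    (cubicalMeasure d m p {ω}).toReal = ∏ y, w p (ω y) := by
  haveI : IsProbabilityMeasure (bernoulliMeasure p) := bern_prob p hp0 hp1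
  rw [cubicalMeasure, ← Set.univ_pi_singleton ω, Measure.pi_pi, ENNReal.toReal_prod]
  refine Finset.prod_congr rfl fun y _ => ?_
  rw [bern_singleton, ENNReal.toReal_ofReal]
  cases ω y <;> simp [w] <;> linarith

lemma sum_prod_w {ι : Type*} [Fintype ι] [DecidableEq ι] (g : ι → Bool → ℝ) :
    ∑ ω : ι → Bool, ∏ y, g y (ω y) = ∏ y, (g y true + g y false) := by
  rw [← Fintype.prod_sum g]
  exact Finset.prod_congr rfl fun y _ => by rw [Fintype.sum_bool]

lemma adj_card {d m : ℕ} [NeZero m] (hm : 2 ≤ m) (x : Fin d → ZMod m) (S : Finset (Fin d)) :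
    (Finset.univ.filter (fun y => cubeAdjacent d m x S y)).card = 2 ^ (d - S.card) := by
  haveI : Fact (1 < m) := ⟨hm⟩
  have h01 : (0 : ZMod m) ≠ 1 := zero_ne_one
  set E := Fintype.piFinset (fun i : Fin d => if i ∈ S then ({0} : Finset (ZMod m)) else {0,1})
    with hE
  have himg : Finset.univ.filter (fun y => cubeAdjacent d m x S y)
      = E.image (fun ε => x - ε) := by
    ext y
    rw [Finset.mem_filter]
    simp only [Finset.mem_filter, Finset.mem_univ, true_and, Finset.mem_image,
      Fintype.mem_piFinset, hE, cubeAdjacent]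
    constructor
    · rintro ⟨ε, h1, h2, rfl⟩
      refine ⟨ε, fun i => ?_, rfl⟩
      by_cases hi : i ∈ S
      · simp [hi, h1 i hi]
      · rcases h2 i hi with h | h <;> simp [hi, h]
    · rintro ⟨ε, hε, rfl⟩
      exact ⟨ε, fun i hi => by simpa [hi] using hε i,
        fun i hi => by simpa [hi] using hε i, rfl⟩
  have hinj : Function.Injective (fun ε : Fin d → ZMod m => x - ε) := by
    intro a b hab
    simp only at hab
    have h' : x - (x - a) = x - (x - b) := by rw [hab]
    simpa [sub_sub_cancel] using h'
  rw [himg, Finset.card_image_of_injective _ hinj, hE, Fintype.card_piFinset]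
  have hc : ∀ i : Fin d,
      ((if i ∈ S then ({0} : Finset (ZMod m)) else {0,1})).card = if i ∈ S then 1 else 2 := by
    intro i
    by_cases hi : i ∈ S <;> simp [hi, Finset.card_pair h01]
  rw [Finset.prod_congr rfl fun i _ => hc i, Finset.prod_ite, Finset.prod_const,
    Finset.prod_const, one_pow, one_mul]
  congr 1
  have := Finset.card_filter_add_card_filter_not (s := (Finset.univ : Finset (Fin d)))
    (p := fun i => i ∈ S)
  simp only [Finset.filter_univ_mem, Finset.card_univ, Fintype.card_fin] at this
  omega

lemma face_sum {d m : ℕ} [NeZero m] (hm : 2 ≤ m) (p : ℝ) (hp0 : 0 ≤ p) (hp1 : p ≤ 1)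
    (x : Fin d → ZMod m) (S : Finset (Fin d)) :
    ∑ ω : (Fin d → ZMod m) → Bool,
      (∏ y, w p (ω y)) * (if facePresent d m ω x S then (1:ℝ) else 0)
    = 1 - (1 - p) ^ (2 ^ (d - S.card)) := by
  set A : Finset (Fin d → ZMod m) := Finset.univ.filter (fun y => cubeAdjacent d m x S y)
    with hAdef
  have hcard : A.card = 2 ^ (d - S.card) := adj_card hm x S
  have hind : ∀ ω : (Fin d → ZMod m) → Bool, (if facePresent d m ω x S then (1:ℝ) else 0)
      = 1 - ∏ y, (if y ∈ A ∧ ω y = true then (0:ℝ) else 1) := by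
    intro ω
    by_cases h : facePresent d m ω x S
    · obtain ⟨y0, hy0, hy0'⟩ := h
      rw [if_pos ⟨y0, hy0, hy0'⟩, Finset.prod_eq_zero (Finset.mem_univ y0)]
      · ring
      · simp [hAdef, hy0, hy0']
    · rw [if_neg h, Finset.prod_eq_one]
      · ring
      · intro y _
        rw [if_neg]
        rintro ⟨hyA, hyt⟩
        exact h ⟨y, by simpa [hAdef] using hyA, hyt⟩
  have hsplit : ∀ ω : (Fin d → ZMod m) → Bool,
      (∏ y, w p (ω y)) * (if facePresent d m ω x S then (1:ℝ) else 0)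
      = (∏ y, w p (ω y))
        - ∏ y, (w p (ω y) * (if y ∈ A ∧ ω y = true then (0:ℝ) else 1)) := by
    intro ω
    rw [hind ω, Finset.prod_mul_distrib]
    ring
  simp only [hsplit]
  rw [Finset.sum_sub_distrib]
  have h1 : ∑ ω : (Fin d → ZMod m) → Bool, ∏ y, w p (ω y) = 1 := by
    rw [sum_prod_w (fun _ b => w p b), Finset.prod_eq_one]
    intro y _
    simp [w]
  have h2 : ∑ ω : (Fin d → ZMod m) → Bool,
      ∏ y, (w p (ω y) * (if y ∈ A ∧ ω y = true then (0:ℝ) else 1))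
      = (1 - p) ^ (2 ^ (d - S.card)) := by
    rw [sum_prod_w (fun y b => w p b * (if y ∈ A ∧ b = true then (0:ℝ) else 1))]
    have hterm : ∀ y : Fin d → ZMod m,
        (w p true * (if y ∈ A ∧ true = true then (0:ℝ) else 1)
          + w p false * (if y ∈ A ∧ false = true then (0:ℝ) else 1))
        = if y ∈ A then 1 - p else 1 := by
      intro y
      by_cases hy : y ∈ A <;> simp [hy, w]
    rw [Finset.prod_congr rfl fun y _ => hterm y, Finset.prod_ite, Finset.prod_const,
      Finset.prod_const, one_pow, mul_one, Finset.filter_univ_mem, hcard]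
  rw [h1, h2]

lemma face_count {d : ℕ} (m k : ℕ) [NeZero m] :
    (Finset.univ.filter
      (fun xS : (Fin d → ZMod m) × Finset (Fin d) => xS.2.card = k)).card
    = m ^ d * Nat.choose d k := by
  rw [← Finset.univ_product_univ,
    Finset.filter_product_right (q := fun S : Finset (Fin d) => S.card = k),
    Finset.card_product]
  congr 1
  · rw [Finset.card_univ]
    simp [ZMod.card]
  · have : Finset.univ.filter (fun S : Finset (Fin d) => S.card = k)
        = (Finset.univ : Finset (Fin d)).powersetCard k := by
      rw [Finset.powersetCard_eq_filter, Finset.powerset_univ]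
    rw [this, Finset.card_powersetCard, Finset.card_univ, Fintype.card_fin]

end ExpectedEulerAux

open ExpectedEulerAux in
/-- The expected Euler characteristic of the random cubical complex `Q(n,p)`, `n = m^d`,
equals `m^d * Σ_{k=0}^d (-1)^k (d choose k) (1 - (1-p)^(2^(d-k)))`. -/
theorem expected_euler_char_cubical (d m : ℕ) [NeZero m] (hd : 1 ≤ d) (hm : 2 ≤ m)
    (p : ℝ) (hp0 : 0 ≤ p) (hp1 : p ≤ 1) :
    ∫ ω, eulerChar d m ω ∂(cubicalMeasure d m p) =
      (m : ℝ) ^ d * ∑ k ∈ Finset.range (d + 1),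
        (-1 : ℝ) ^ k * (d.choose k) * (1 - (1 - p) ^ (2 ^ (d - k))) := by
  haveI : IsProbabilityMeasure (bernoulliMeasure p) := bern_prob p hp0 hp1
  haveI : IsProbabilityMeasure (cubicalMeasure d m p) := by
    unfold cubicalMeasure; infer_instance
  rw [integral_fintype (Integrable.of_finite)]
  simp only [smul_eq_mul, measureReal_def, pi_singleton p hp0 hp1, eulerChar]
  have hswap : ∀ ω : (Fin d → ZMod m) → Bool,
      (∏ y, w p (ω y)) * ∑ k ∈ Finset.range (d + 1), (-1:ℝ) ^ k * (numFaces d m k ω : ℝ)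
      = ∑ k ∈ Finset.range (d + 1),
          (-1:ℝ) ^ k * ((∏ y, w p (ω y)) * (numFaces d m k ω : ℝ)) := by
    intro ω
    rw [Finset.mul_sum]
    exact Finset.sum_congr rfl fun k _ => by ring
  simp only [hswap]
  rw [Finset.sum_comm, Finset.mul_sum]
  refine Finset.sum_congr rfl fun k hk => ?_
  have key : ∑ ω : (Fin d → ZMod m) → Bool, (∏ y, w p (ω y)) * (numFaces d m k ω : ℝ)
      = (m ^ d * Nat.choose d k : ℕ) * (1 - (1 - p) ^ (2 ^ (d - k))) := by
    have hnum : ∀ ω : (Fin d → ZMod m) → Bool, (numFaces d m k ω : ℝ)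
        = ∑ xS : (Fin d → ZMod m) × Finset (Fin d),
            (if xS.2.card = k then (1:ℝ) else 0)
              * (if facePresent d m ω xS.1 xS.2 then (1:ℝ) else 0) := by
      intro ω
      rw [numFaces, Finset.card_filter]
      push_cast
      refine Finset.sum_congr rfl fun xS _ => ?_
      by_cases h1 : xS.2.card = k <;> by_cases h2 : facePresent d m ω xS.1 xS.2 <;>
        simp [h1, h2]
    simp only [hnum, Finset.mul_sum]
    rw [Finset.sum_comm]
    have hinner : ∀ xS : (Fin d → ZMod m) × Finset (Fin d),
        ∑ ω : (Fin d → ZMod m) → Bool,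
          (∏ y, w p (ω y)) * ((if xS.2.card = k then (1:ℝ) else 0)
            * (if facePresent d m ω xS.1 xS.2 then (1:ℝ) else 0))
        = if xS.2.card = k then 1 - (1 - p) ^ (2 ^ (d - k)) else 0 := by
      intro xS
      by_cases h1 : xS.2.card = k
      · simp only [h1, if_true, one_mul, mul_one]
        have := face_sum hm p hp0 hp1 xS.1 xS.2
        rw [h1] at this
        exact this
      · simp [h1]
    rw [Finset.sum_congr rfl fun xS _ => hinner xS, Finset.sum_ite, Finset.sum_const,
      Finset.sum_const_zero, add_zero, face_count m k, nsmul_eq_mul]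
  rw [← Finset.mul_sum, key]
  push_cast
  ring
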